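/- Let X be a compact metric space and let FS∼ be the finest closed equivalence relation respecting the family of all limit continua of X. Then the quotient X/FS∼ is finitely Suslinian. -/

import Mathlib

open Set Filter Metric Topology Function

/-- A relation on a topological space is closed if its graph is closed. -/
def ClosedRel {Y : Type*} [TopologicalSpace Y] (r : Y → Y → Prop) : Prop :=
  IsClosed {p : Y × Y | r p.1 p.2}

/-- A relation respects a family `A` of subsets if it is closed and each member of `A`
is contained in a single class. -/
def Respects {Y : Type*} [TopologicalSpace Y] (A : Set (Set Y)) (r : Y → Y → Prop) : Prop :=
  ClosedRel r ∧ ∀ a ∈ A, ∀ x ∈ a, ∀ y ∈ a, r x y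

/-- The finest closed equivalence relation respecting `A`: the intersection of all
closed equivalence relations respecting `A`. -/
def finestRel {Y : Type*} [TopologicalSpace Y] (A : Set (Set Y)) : Y → Y → Prop :=
  fun x y => ∀ r : Y → Y → Prop, Equivalence r → Respects A r → r x y

/-- A limit continuum: a subcontinuum which is the Hausdorff limit of a sequence of
pairwise disjoint subcontinua. -/
def IsLimCont {Y : Type*} [MetricSpace Y] (C : Set Y) : Prop :=
  IsCompact C ∧ IsConnected C ∧
  ∃ F : ℕ → Set Y, (∀ n, IsCompact (F n) ∧ IsConnected (F n)) ∧
    Pairwise (Disjoint on F) ∧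
    Tendsto (fun n => EMetric.hausdorffEdist (F n) C) atTop (nhds 0)

/-- Finitely Suslinian: every family of pairwise disjoint subcontinua of diameter at least
`ε > 0` is finite. -/
def FinSus (Y : Type*) [MetricSpace Y] : Prop :=
  ∀ ε : ℝ, 0 < ε → ∀ S : Set (Set Y),
    (∀ C ∈ S, IsCompact C ∧ IsConnected C ∧ ε ≤ Metric.diam C) →
    S.Pairwise Disjoint → S.Finite

/-- A subcontinuum of the subset `Z`. -/
def SubcontIn {E : Type*} [MetricSpace E] (Z C : Set E) : Prop :=
  C ⊆ Z ∧ IsCompact C ∧ IsConnected C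

/-- A limit continuum of the subset `Z`. -/
def LimContIn {E : Type*} [MetricSpace E] (Z C : Set E) : Prop :=
  SubcontIn Z C ∧ ∃ F : ℕ → Set E, (∀ n, SubcontIn Z (F n)) ∧
    Pairwise (Disjoint on F) ∧
    Tendsto (fun n => EMetric.hausdorffEdist (F n) C) atTop (nhds 0)

/-- The subset `Z` is finitely Suslinian. -/
def FinSusIn {E : Type*} [MetricSpace E] (Z : Set E) : Prop :=
  ∀ ε : ℝ, 0 < ε → ∀ S : Set (Set E),
    (∀ C ∈ S, SubcontIn Z C ∧ ε ≤ Metric.diam C) → S.Pairwise Disjoint → S.Finite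

/-- A planar compactum is unshielded if it is the boundary of the unbounded component of
its complement. -/
def Unshielded (X : Set ℂ) : Prop :=
  ∀ z, z ∉ X → ¬Bornology.IsBounded (connectedComponentIn Xᶜ z) →
    X = frontier (connectedComponentIn Xᶜ z)

lemma finestRel_equivalence {Y : Type*} [TopologicalSpace Y] (A : Set (Set Y)) :
    Equivalence (finestRel A) := by
  constructor
  · exact fun x r hr _ => hr.refl x
  · exact fun h r hr hR => hr.symm (h r hr hR)
  · exact fun h1 h2 r hr hR => hr.trans (h1 r hr hR) (h2 r hr hR)

lemma finestRel_closed {Y : Type*} [TopologicalSpace Y] (A : Set (Set Y)) :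
    ClosedRel (finestRel A) := by
  have h : {p : Y × Y | finestRel A p.1 p.2} =
      ⋂ (r : Y → Y → Prop) (_ : Equivalence r) (_ : Respects A r), {p | r p.1 p.2} := by
    ext p
    simp only [Set.mem_iInter, Set.mem_setOf_eq]
    rfl
  unfold ClosedRel
  rw [h]
  exact isClosed_iInter fun r => isClosed_iInter fun _ => isClosed_iInter fun hR => hR.1

lemma tendsto_edist_zero_of_tendsto' {α : Type*} [PseudoEMetricSpace α] {f : ℕ → α} {a : α}
    (h : Tendsto f atTop (nhds a)) :
    Tendsto (fun n => edist (f n) a) atTop (nhds 0) := by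
  rw [ENNReal.tendsto_nhds_zero]
  intro ε hε
  exact (EMetric.tendsto_nhds.1 h ε hε).mono fun n hn => hn.le

lemma exists_hausdorff_limit {E : Type*} [MetricSpace E] [CompactSpace E]
    (F : ℕ → Set E) (hFc : ∀ n, IsCompact (F n)) (hFne : ∀ n, (F n).Nonempty) :
    ∃ (C : Set E) (φ : ℕ → ℕ), C.Nonempty ∧ IsCompact C ∧ StrictMono φ ∧
      Tendsto (fun n => EMetric.hausdorffEdist (F (φ n)) C) atTop (nhds 0) := by
  let G : ℕ → TopologicalSpace.NonemptyCompacts E := fun n => ⟨⟨F n, hFc n⟩, hFne n⟩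
  obtain ⟨L, φ, hφ, hconv⟩ := CompactSpace.tendsto_subseq G
  exact ⟨(L : Set E), φ, L.nonempty, L.isCompact, hφ, tendsto_edist_zero_of_tendsto' hconv⟩

lemma mem_limit_of_tendsto {E : Type*} [MetricSpace E] {F : ℕ → Set E} {C : Set E}
    (hC : IsClosed C)
    (hconv : Tendsto (fun n => EMetric.hausdorffEdist (F n) C) atTop (nhds 0))
    {x : ℕ → E} {a : E} (hx : ∀ n, x n ∈ F n) (ha : Tendsto x atTop (nhds a)) : a ∈ C := by
  rw [EMetric.mem_iff_infEdist_zero_of_closed hC]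
  have key : ∀ n, EMetric.infEdist a C ≤ edist a (x n) + EMetric.hausdorffEdist (F n) C :=
    fun n => le_trans EMetric.infEdist_le_edist_add_infEdist
      (add_le_add le_rfl (EMetric.infEdist_le_hausdorffEdist_of_mem (hx n)))
  have h1 : Tendsto (fun n => edist a (x n) + EMetric.hausdorffEdist (F n) C) atTop (nhds 0) := by
    have h2 : Tendsto (fun n => edist a (x n)) atTop (nhds 0) := by
      have := tendsto_edist_zero_of_tendsto' ha
      simpa [edist_comm] using this
    simpa using h2.add hconv
  have := ge_of_tendsto' h1 key
  exact nonpos_iff_eq_zero.1 this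

lemma isPreconnected_limit {E : Type*} [MetricSpace E] {F : ℕ → Set E} {C : Set E}
    (hFc : ∀ n, IsConnected (F n)) (hC : IsCompact C)
    (hconv : Tendsto (fun n => EMetric.hausdorffEdist (F n) C) atTop (nhds 0)) :
    IsPreconnected C := by
  rw [isPreconnected_iff_subset_of_fully_disjoint_closed hC.isClosed]
  intro u v hu hv hCuv huv
  by_cases hCu : (C ∩ u).Nonempty; swap
  · right; intro z hz
    rcases hCuv hz with h | h
    · exact absurd ⟨z, hz, h⟩ hCu
    · exact h
  by_cases hCv : (C ∩ v).Nonempty; swap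
  · left; intro z hz
    rcases hCuv hz with h | h
    · exact h
    · exact absurd ⟨z, hz, h⟩ hCv
  exfalso
  obtain ⟨δ, hδ, hdisj⟩ :=
    (huv.mono inter_subset_right inter_subset_right).exists_thickenings
      (hC.inter_right hu) (hC.isClosed.inter hv)
  have hδ0 : (0 : ENNReal) < ENNReal.ofReal δ := ENNReal.ofReal_pos.2 hδ
  obtain ⟨n, hn⟩ := (hconv.eventually_lt_const hδ0).exists
  have hsub : F n ⊆ thickening δ (C ∩ u) ∪ thickening δ (C ∩ v) := by
    intro z hz
    have : EMetric.infEdist z C < ENNReal.ofReal δ :=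
      lt_of_le_of_lt (EMetric.infEdist_le_hausdorffEdist_of_mem hz) hn
    obtain ⟨c, hcC, hcz⟩ := EMetric.infEdist_lt_iff.1 this
    rcases hCuv hcC with hcu | hcv
    · exact Or.inl ((mem_thickening_iff_exists_edist_lt _ _).2 ⟨c, ⟨hcC, hcu⟩, hcz⟩)
    · exact Or.inr ((mem_thickening_iff_exists_edist_lt _ _).2 ⟨c, ⟨hcC, hcv⟩, hcz⟩)
  have hmeet : ∀ w : Set E, (C ∩ w).Nonempty →
      (F n ∩ thickening δ (C ∩ w)).Nonempty := by
    rintro w ⟨c, hcC, hcw⟩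
    have : EMetric.infEdist c (F n) < ENNReal.ofReal δ := by
      refine lt_of_le_of_lt (EMetric.infEdist_le_hausdorffEdist_of_mem hcC) ?_
      rwa [EMetric.hausdorffEdist_comm]
    obtain ⟨z, hzF, hcz⟩ := EMetric.infEdist_lt_iff.1 this
    exact ⟨z, hzF, (mem_thickening_iff_exists_edist_lt _ _).2 ⟨c, ⟨hcC, hcw⟩, by rwa [edist_comm]⟩⟩
  obtain ⟨z, hz1, hz2, hz3⟩ := (hFc n).isPreconnected
    (thickening δ (C ∩ u)) (thickening δ (C ∩ v)) isOpen_thickening isOpen_thickening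
    hsub (hmeet u hCu) (hmeet v hCv)
  exact (hdisj.le_bot ⟨hz2, hz3⟩ : False)

lemma finestRel_class_isPreconnected {X : Type*} [MetricSpace X] [CompactSpace X]
    (A : Set (Set X)) (hA : ∀ a ∈ A, IsPreconnected a) (x : X) :
    IsPreconnected {y | finestRel A x y} := by
  set r : X → X → Prop := finestRel A with hrdef
  have hre : Equivalence r := finestRel_equivalence A
  have hrc : ClosedRel r := finestRel_closed A
  set s : X → Set X := fun z => {y | r z y} with hsdef
  have hscl : ∀ z, IsClosed (s z) := by
    intro z
    have h : s z = (fun y => (z, y)) ⁻¹' {p : X × X | r p.1 p.2} := rfl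
    rw [h]
    exact hrc.preimage (continuous_const.prodMk continuous_id)
  have hmem : ∀ z, z ∈ s z := fun z => hre.refl z
  set Q : X → Set X := fun z => connectedComponentIn (s z) z with hQdef
  have hQmem : ∀ z, z ∈ Q z := fun z => mem_connectedComponentIn (hmem z)
  have hQsub : ∀ z, Q z ⊆ s z := fun z => connectedComponentIn_subset _ _
  have hQconn : ∀ z, IsConnected (Q z) := fun z =>
    isConnected_connectedComponentIn_iff.2 (hmem z)
  have hQcomp : ∀ z, IsCompact (Q z) := by
    intro z
    have h : Q z = (↑) '' connectedComponent (⟨z, hmem z⟩ : s z) :=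
      connectedComponentIn_eq_image (hmem z)
    rw [h]
    have : CompactSpace (s z) := isCompact_iff_compactSpace.1 (hscl z).isCompact
    exact isClosed_connectedComponent.isCompact.image continuous_subtype_val
  set r' : X → X → Prop := fun a b => b ∈ Q a with hr'def
  have hclass_eq : ∀ {a b : X}, r a b → s a = s b := by
    intro a b hab
    ext z
    exact ⟨fun h => hre.trans (hre.symm hab) h, fun h => hre.trans hab h⟩
  have hr'equiv : Equivalence r' := by
    constructor
    · exact fun a => hQmem a
    · intro a b h
      have hab : r a b := hQsub a h
      show a ∈ connectedComponentIn (s b) b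
      rw [← hclass_eq hab, ← connectedComponentIn_eq h]
      exact hQmem a
    · intro a b c h1 h2
      have hab : r a b := hQsub a h1
      show c ∈ connectedComponentIn (s a) a
      rw [connectedComponentIn_eq h1, hclass_eq hab]
      exact h2
  have hr'cl : ClosedRel r' := by
    have hseq : IsSeqClosed {p : X × X | r' p.1 p.2} := by
      intro u p hu hconv
      obtain ⟨C, φ, hCne, hCcomp, hφ, hH⟩ := exists_hausdorff_limit (fun k => Q ((u k).1))
        (fun k => hQcomp _) (fun k => ⟨_, hQmem _⟩)
      have ha : Tendsto (fun k => (u k).1) atTop (nhds p.1) :=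
        (continuous_fst.tendsto p).comp hconv
      have hb : Tendsto (fun k => (u k).2) atTop (nhds p.2) :=
        (continuous_snd.tendsto p).comp hconv
      have haφ : Tendsto (fun k => (u (φ k)).1) atTop (nhds p.1) := ha.comp hφ.tendsto_atTop
      have hbφ : Tendsto (fun k => (u (φ k)).2) atTop (nhds p.2) := hb.comp hφ.tendsto_atTop
      have hp1C : p.1 ∈ C := mem_limit_of_tendsto hCcomp.isClosed hH (fun k => hQmem _) haφ
      have hp2C : p.2 ∈ C := mem_limit_of_tendsto hCcomp.isClosed hH (fun k => hu (φ k)) hbφ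
      have hCs : C ⊆ s p.1 := by
        intro z hz
        have hch : ∀ k, ∃ w ∈ Q ((u (φ k)).1),
            EMetric.infEdist z (Q ((u (φ k)).1)) = edist z w :=
          fun k => (hQcomp _).exists_infEdist_eq_edist ⟨_, hQmem _⟩ z
        choose w hw hwe using hch
        have hwz : Tendsto w atTop (nhds z) := by
          rw [EMetric.tendsto_nhds]
          intro ε hε
          filter_upwards [hH.eventually_lt_const hε] with k hk
          have h1 : edist z (w k) ≤ EMetric.hausdorffEdist (Q ((u (φ k)).1)) C := by
            rw [← hwe k]
            refine le_of_le_of_eq ?_ EMetric.hausdorffEdist_comm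
            exact EMetric.infEdist_le_hausdorffEdist_of_mem hz
          rw [edist_comm]
          exact lt_of_le_of_lt h1 hk
        have hr_all : ∀ k, ((u (φ k)).1, w k) ∈ {q : X × X | r q.1 q.2} :=
          fun k => hQsub _ (hw k)
        have hpair : Tendsto (fun k => ((u (φ k)).1, w k)) atTop (nhds (p.1, z)) :=
          haφ.prodMk_nhds hwz
        exact hrc.mem_of_tendsto hpair (Filter.Eventually.of_forall hr_all)
      have hCpre : IsPreconnected C :=
        isPreconnected_limit (fun k => hQconn _) hCcomp hH
      have hfin : C ⊆ connectedComponentIn (s p.1) p.1 :=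
        hCpre.subset_connectedComponentIn hp1C hCs
      exact hfin hp2C
    exact hseq.isClosed
  have hr'resp : Respects A r' := by
    refine ⟨hr'cl, ?_⟩
    intro a ha p hp q hq
    have has : a ⊆ s p := fun z hz r0 he h0 => h0.2 a ha p hp z hz
    exact (hA a ha).subset_connectedComponentIn hp has hq
  have hfinal : {y | finestRel A x y} = Q x :=
    Subset.antisymm (fun y hy => hy r' hr'equiv hr'resp) (hQsub x)
  rw [hfinal]
  exact isPreconnected_connectedComponentIn

lemma preimage_preconnected {X Y : Type*} [TopologicalSpace X] [CompactSpace X]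
    [TopologicalSpace Y] [T2Space Y]
    {m : X → Y} (hmc : Continuous m) (hms : Surjective m)
    (hfib : ∀ y, IsPreconnected (m ⁻¹' {y})) {K : Set Y} (hK : IsClosed K)
    (hKpre : IsPreconnected K) : IsPreconnected (m ⁻¹' K) := by
  have hPcl : IsClosed (m ⁻¹' K) := hK.preimage hmc
  rw [isPreconnected_iff_subset_of_fully_disjoint_closed hPcl]
  intro u v hu hv hsub huv
  have hfibcl : ∀ y : Y, IsClosed (m ⁻¹' {y}) := fun y => isClosed_singleton.preimage hmc
  have hcases : ∀ y ∈ K, m ⁻¹' {y} ⊆ u ∨ m ⁻¹' {y} ⊆ v := by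
    intro y hy
    have h1 : m ⁻¹' {y} ⊆ u ∪ v :=
      (preimage_mono (singleton_subset_iff.2 hy)).trans hsub
    exact (isPreconnected_iff_subset_of_fully_disjoint_closed (hfibcl y)).1 (hfib y)
      u v hu hv h1 huv
  set u' : Set X := u ∩ m ⁻¹' K with hu'
  set v' : Set X := v ∩ m ⁻¹' K with hv'
  have hu'c : IsCompact (m '' u') := ((hu.inter hPcl).isCompact).image hmc
  have hv'c : IsCompact (m '' v') := ((hv.inter hPcl).isCompact).image hmc
  have hdisj : Disjoint (m '' u') (m '' v') := by
    rw [Set.disjoint_left]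
    rintro y ⟨x1, ⟨hx1u, hx1K⟩, rfl⟩ ⟨x2, ⟨hx2v, hx2K⟩, hx2⟩
    rcases hcases (m x1) hx1K with h | h
    · exact (Set.disjoint_left.1 huv) (h (show x2 ∈ m ⁻¹' {m x1} from hx2)) hx2v
    · exact (Set.disjoint_left.1 huv) hx1u (h (show x1 ∈ m ⁻¹' {m x1} from rfl))
  have hcover : K ⊆ m '' u' ∪ m '' v' := by
    intro y hy
    obtain ⟨x, rfl⟩ := hms y
    have hxK : x ∈ m ⁻¹' K := hy
    rcases hcases (m x) hy with h | h
    · exact Or.inl ⟨x, ⟨h rfl, hxK⟩, rfl⟩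
    · exact Or.inr ⟨x, ⟨h rfl, hxK⟩, rfl⟩
  rcases (isPreconnected_iff_subset_of_fully_disjoint_closed hK).1 hKpre
      (m '' u') (m '' v') hu'c.isClosed hv'c.isClosed hcover hdisj with h | h
  · left
    intro x hx
    obtain ⟨x', ⟨hx'u, hx'K⟩, hx'⟩ := h hx
    rcases hcases (m x) hx with hc | hc
    · exact hc rfl
    · exact absurd hx'u (Set.disjoint_right.1 huv (hc (show x' ∈ m ⁻¹' {m x} from hx')))
  · right
    intro x hx
    obtain ⟨x', ⟨hx'v, hx'K⟩, hx'⟩ := h hx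
    rcases hcases (m x) hx with hc | hc
    · exact absurd hx'v (Set.disjoint_left.1 huv (hc (show x' ∈ m ⁻¹' {m x} from hx')))
    · exact hc rfl

/-- the quotient of a compactum by the finest closed equivalence relation
respecting the family of limit continua is finitely Suslinian.  The quotient is realized
by a continuous surjection `m` onto a compact metric space whose fibers are exactly the
classes of the relation. -/
theorem quotient_by_limit_continua_finSus
    {X : Type*} [MetricSpace X] [CompactSpace X]
    {Y : Type*} [MetricSpace Y] [CompactSpace Y]
    (m : X → Y) (hmc : Continuous m) (hms : Function.Surjective m)
    (hfib : ∀ x y : X, m x = m y ↔ finestRel {C : Set X | IsLimCont C} x y) :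
    FinSus Y := by
  classical
  intro ε hε S hS hdisjS
  by_contra hSfin
  have hSinf : S.Infinite := hSfin
  set A : Set (Set X) := {C : Set X | IsLimCont C} with hA
  have hfibpre : ∀ y : Y, IsPreconnected (m ⁻¹' {y}) := by
    intro y
    obtain ⟨x0, rfl⟩ := hms y
    have h : m ⁻¹' {m x0} = {z | finestRel A x0 z} := by
      ext z
      simp only [mem_preimage, mem_singleton_iff, mem_setOf_eq]
      rw [← hfib x0 z, eq_comm]
    rw [h]
    exact finestRel_class_isPreconnected A (fun a ha => ha.2.1.isPreconnected) x0
  set e : ℕ ↪ S := Set.Infinite.natEmbedding S hSinf with he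
  set K : ℕ → Set Y := fun n => (e n : Set Y) with hK
  have hKmem : ∀ n, K n ∈ S := fun n => (e n).2
  have hKinj : Function.Injective K := fun i j h => e.injective (Subtype.ext h)
  have hKc : ∀ n, IsCompact (K n) := fun n => (hS _ (hKmem n)).1
  have hKconn : ∀ n, IsConnected (K n) := fun n => (hS _ (hKmem n)).2.1
  have hKdiam : ∀ n, ε ≤ Metric.diam (K n) := fun n => (hS _ (hKmem n)).2.2
  have hKdisj : Pairwise (Disjoint on K) := fun i j hij =>
    hdisjS (hKmem i) (hKmem j) fun h => hij (hKinj h)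
  have hfar : ∀ n, ∃ p ∈ K n, ∃ q ∈ K n, ε / 2 < dist p q := by
    intro n
    by_contra hcon
    push_neg at hcon
    have : Metric.diam (K n) ≤ ε / 2 :=
      Metric.diam_le_of_forall_dist_le (by linarith) fun p hp q hq => hcon p hp q hq
    linarith [hKdiam n]
  choose pf hpf qf hqf hpq using hfar
  set P : ℕ → Set X := fun n => m ⁻¹' (K n) with hP
  have hPcl : ∀ n, IsClosed (P n) := fun n => (hKc n).isClosed.preimage hmc
  have hPcomp : ∀ n, IsCompact (P n) := fun n => (hPcl n).isCompact
  have hPne : ∀ n, (P n).Nonempty := by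
    intro n
    obtain ⟨y, hy⟩ := (hKconn n).nonempty
    obtain ⟨x, rfl⟩ := hms y
    exact ⟨x, hy⟩
  have hPconn : ∀ n, IsConnected (P n) := fun n =>
    ⟨hPne n, preimage_preconnected hmc hms hfibpre (hKc n).isClosed (hKconn n).isPreconnected⟩
  have hPdisj : Pairwise (Disjoint on P) := fun i j hij => (hKdisj hij).preimage m
  choose af haf using fun n => hms (pf n)
  choose bf hbf using fun n => hms (qf n)
  obtain ⟨C, φ, hCne, hCcomp, hφ, hH⟩ := exists_hausdorff_limit P hPcomp hPne
  obtain ⟨x, σ, hσ, hxconv⟩ := CompactSpace.tendsto_subseq fun k => af (φ k)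
  obtain ⟨y, τ, hτ, hyconv⟩ := CompactSpace.tendsto_subseq fun k => bf (φ (σ k))
  set ψ : ℕ → ℕ := fun k => φ (σ (τ k)) with hψ
  have hψmono : StrictMono ψ := hφ.comp (hσ.comp hτ)
  have hHψ : Tendsto (fun k => EMetric.hausdorffEdist (P (ψ k)) C) atTop (nhds 0) :=
    hH.comp (hσ.comp hτ).tendsto_atTop
  have haψ : Tendsto (fun k => af (ψ k)) atTop (nhds x) := hxconv.comp hτ.tendsto_atTop
  have hbψ : Tendsto (fun k => bf (ψ k)) atTop (nhds y) := hyconv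
  have hamem : ∀ k, af (ψ k) ∈ P (ψ k) := by
    intro k
    show m (af (ψ k)) ∈ K (ψ k)
    rw [haf]
    exact hpf _
  have hbmem : ∀ k, bf (ψ k) ∈ P (ψ k) := by
    intro k
    show m (bf (ψ k)) ∈ K (ψ k)
    rw [hbf]
    exact hqf _
  have hxC : x ∈ C := mem_limit_of_tendsto hCcomp.isClosed hHψ hamem haψ
  have hyC : y ∈ C := mem_limit_of_tendsto hCcomp.isClosed hHψ hbmem hbψ
  have hCmem : C ∈ A := by
    refine ⟨hCcomp, ⟨⟨x, hxC⟩, isPreconnected_limit (fun k => hPconn (ψ k)) hCcomp hHψ⟩,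
      fun k => P (ψ k), fun k => ⟨hPcomp _, hPconn _⟩, ?_, hHψ⟩
    exact fun i j hij => hPdisj (hψmono.injective.ne hij)
  have hrel : finestRel A x y := fun r0 he0 h0 => h0.2 C hCmem x hxC y hyC
  have hmxy : m x = m y := (hfib x y).2 hrel
  have htend : Tendsto (fun k => dist (m (af (ψ k))) (m (bf (ψ k)))) atTop
      (nhds (dist (m x) (m y))) :=
    ((hmc.tendsto x).comp haψ).dist ((hmc.tendsto y).comp hbψ)
  have hge : ε / 2 ≤ dist (m x) (m y) := by
    refine ge_of_tendsto' htend fun k => ?_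
    rw [haf, hbf]
    exact (hpq _).le
  rw [hmxy, dist_self] at hge
  linarith
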